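/- Let U be a unitary n×n matrix, W₁,…,Wₖ unitary n×n matrices, q a probability distribution, W̄ = Σₐ q(a)Wₐ, δ = Σₐ q(a)‖Wₐ − W̄‖². Then for any σ with trace norm at most 1, ‖U σ U† − Σₐ q(a) Wₐ σ Wₐ†‖₁ ≤ δ + 2‖W̄ − U‖. -/

import Mathlib

open scoped Matrix.Norms.L2Operator ComplexOrder Kronecker
open Matrix Complex

/-- The positive semidefinite square root of a positive semidefinite matrix
(removed from Mathlib; restored here with its old definition). -/
noncomputable def Matrix.PosSemidef.sqrt {n : Type*} [Fintype n] [DecidableEq n] {𝕜 : Type*}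
    [RCLike 𝕜] {A : Matrix n n 𝕜} (hA : Matrix.PosSemidef A) : Matrix n n 𝕜 :=
  hA.1.eigenvectorUnitary.1 * diagonal ((↑) ∘ Real.sqrt ∘ hA.1.eigenvalues) *
  (star hA.1.eigenvectorUnitary : Matrix n n 𝕜)

/-- The trace norm (sum of singular values) of a square complex matrix. -/
noncomputable def traceNorm {n : Type*} [Fintype n] [DecidableEq n] (A : Matrix n n ℂ) : ℝ :=
  ((Matrix.posSemidef_conjTranspose_mul_self A).sqrt.trace).re


section TNAux
set_option linter.unusedSectionVars false
variable {m : Type*} [Fintype m] [DecidableEq m]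

lemma tn_norm_one_le : ‖(1 : Matrix m m ℂ)‖ ≤ 1 := by
  rw [Matrix.cstar_norm_def, _root_.map_one]
  exact ContinuousLinearMap.norm_id_le

lemma tn_norm_unitary_le {U : Matrix m m ℂ} (hU : U ∈ Matrix.unitaryGroup m ℂ) : ‖U‖ ≤ 1 := by
  have h1 : Uᴴ * U = 1 := by rw [← Matrix.star_eq_conjTranspose]; exact hU.1
  have h2 := Matrix.l2_opNorm_conjTranspose_mul_self U
  rw [h1] at h2
  nlinarith [norm_nonneg U, tn_norm_one_le (m := m)]

lemma tn_proj_norm_le {B P : Matrix m m ℂ} (hBP : B * Bᴴ = P) (hP2 : P * P = P)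
    (hPh : Pᴴ = P) : ‖B‖ ≤ 1 := by
  have h1 : ‖P‖ * ‖P‖ = ‖P‖ := by
    conv_lhs => rw [← Matrix.l2_opNorm_conjTranspose_mul_self P, hPh, hP2]
  have hP1 : ‖P‖ ≤ 1 := by nlinarith [norm_nonneg P]
  have h2 : ‖B‖ * ‖B‖ = ‖P‖ := by
    calc ‖B‖ * ‖B‖ = ‖Bᴴ‖ * ‖Bᴴ‖ := by rw [Matrix.l2_opNorm_conjTranspose]
    _ = ‖Bᴴᴴ * Bᴴ‖ := (Matrix.l2_opNorm_conjTranspose_mul_self Bᴴ).symm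
    _ = ‖P‖ := by rw [Matrix.conjTranspose_conjTranspose, hBP]
  nlinarith [norm_nonneg B]

lemma tn_coord_le (v : EuclideanSpace ℂ m) (i : m) : ‖v i‖ ≤ ‖v‖ := by
  rw [EuclideanSpace.norm_eq]
  calc ‖v i‖ = Real.sqrt (‖v i‖ ^ 2) := by rw [Real.sqrt_sq (norm_nonneg _)]
  _ ≤ _ := Real.sqrt_le_sqrt (Finset.single_le_sum (fun j _ => sq_nonneg ‖v j‖) (Finset.mem_univ i))

lemma tn_entry_le (M : Matrix m m ℂ) (i j : m) : ‖M i j‖ ≤ ‖M‖ := by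
  have h := Matrix.l2_opNorm_mulVec M ((EuclideanSpace.equiv m ℂ).symm (Pi.single j 1))
  have hx : ‖(EuclideanSpace.equiv m ℂ).symm (Pi.single j 1 : m → ℂ)‖ = 1 := by
    have : ((EuclideanSpace.equiv m ℂ).symm (Pi.single j 1 : m → ℂ))
        = EuclideanSpace.single j (1:ℂ) := rfl
    rw [this, EuclideanSpace.norm_single]; simp
  rw [hx, mul_one] at h
  refine le_trans ?_ (le_trans
    (tn_coord_le ((EuclideanSpace.equiv m ℂ).symm (M *ᵥ Pi.single j 1)) i) h)
  have : ((EuclideanSpace.equiv m ℂ).symm (M *ᵥ Pi.single j 1)) i = M i j := by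
    simp [Matrix.mulVec_single]
  rw [this]

lemma tn_core (A : Matrix m m ℂ) :
    0 ≤ traceNorm A ∧
    (∀ B : Matrix m m ℂ, ((B * A).trace).re ≤ ‖B‖ * traceNorm A) ∧
    (∃ B : Matrix m m ℂ, ‖B‖ ≤ 1 ∧ ((B * A).trace).re = traceNorm A) := by
  have hH := Matrix.posSemidef_conjTranspose_mul_self A
  set u : Matrix m m ℂ := (hH.1.eigenvectorUnitary : Matrix m m ℂ) with hu_def
  set lam : m → ℝ := hH.1.eigenvalues with hlam_def
  have hlam : ∀ i, 0 ≤ lam i := hH.eigenvalues_nonneg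
  have huu : uᴴ * u = 1 := by
    rw [← Matrix.star_eq_conjTranspose]; exact Unitary.coe_star_mul_self hH.1.eigenvectorUnitary
  have huu2 : u * uᴴ = 1 := by
    rw [← Matrix.star_eq_conjTranspose]; exact Unitary.coe_mul_star_self hH.1.eigenvectorUnitary
  have huu' : ∀ Z : Matrix m m ℂ, uᴴ * (u * Z) = Z := fun Z => by
    rw [← Matrix.mul_assoc, huu, Matrix.one_mul]
  have hspec : Aᴴ * A = u * diagonal (fun i => (lam i : ℂ)) * uᴴ := by
    rw [← Matrix.star_eq_conjTranspose u]
    exact hH.1.spectral_theorem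
  have hsqrt : hH.sqrt = u * diagonal (fun i => (Real.sqrt (lam i) : ℂ)) * uᴴ := by
    rw [Matrix.PosSemidef.sqrt, ← Matrix.star_eq_conjTranspose u]
    rfl
  have hnormu : ‖u‖ ≤ 1 := tn_norm_unitary_le hH.1.eigenvectorUnitary.2
  have hnormuH : ‖uᴴ‖ ≤ 1 := by rw [Matrix.l2_opNorm_conjTranspose]; exact hnormu
  -- trace of sqrt
  have htrace : traceNorm A = ∑ i, Real.sqrt (lam i) := by
    have h1 : hH.sqrt.trace = ∑ i, (Real.sqrt (lam i) : ℂ) := by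
      rw [hsqrt, Matrix.trace_mul_cycle, huu, Matrix.one_mul, Matrix.trace_diagonal]
    show (hH.sqrt.trace).re = _
    rw [h1]
    simp
  have htn_nonneg : 0 ≤ traceNorm A := by
    rw [htrace]; exact Finset.sum_nonneg fun i _ => Real.sqrt_nonneg _
  set g : m → ℂ := fun i => if lam i = 0 then 0 else ((Real.sqrt (lam i))⁻¹ : ℝ) with hg_def
  set e : m → ℂ := fun i => if lam i = 0 then 0 else 1 with he_def
  have hgl : ∀ i, g i * (lam i : ℂ) = (Real.sqrt (lam i) : ℂ) := by
    intro i
    by_cases h : lam i = 0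
    · simp [hg_def, h]
    · have hlt : 0 < lam i := lt_of_le_of_ne (hlam i) (Ne.symm h)
      have hs : Real.sqrt (lam i) ≠ 0 := ne_of_gt (Real.sqrt_pos.mpr hlt)
      have : (Real.sqrt (lam i))⁻¹ * lam i = Real.sqrt (lam i) := by
        field_simp
        rw [Real.sq_sqrt (hlam i)]
      simp only [hg_def, if_neg h]
      exact_mod_cast congrArg (fun r : ℝ => (r : ℂ)) this
  have hge : ∀ i, g i * (Real.sqrt (lam i) : ℂ) = e i := by
    intro i
    by_cases h : lam i = 0
    · simp [hg_def, he_def, h]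
    · have hlt : 0 < lam i := lt_of_le_of_ne (hlam i) (Ne.symm h)
      have hs : Real.sqrt (lam i) ≠ 0 := ne_of_gt (Real.sqrt_pos.mpr hlt)
      simp only [hg_def, he_def, if_neg h]
      rw [← Complex.ofReal_mul, inv_mul_cancel₀ hs, Complex.ofReal_one]
  have hgsg : ∀ i, g i * ((lam i : ℂ) * g i) = e i := by
    intro i
    rw [← mul_assoc, hgl, mul_comm, hge]
  have hgstar : star g = g := by
    funext i
    by_cases h : lam i = 0 <;> simp [hg_def, h]
  have hestar : star e = e := by
    funext i
    by_cases h : lam i = 0 <;> simp [he_def, h]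
  set Q : Matrix m m ℂ := u * diagonal g * uᴴ with hQ_def
  have hQH : Qᴴ = Q := by
    rw [hQ_def]
    simp only [Matrix.conjTranspose_mul, Matrix.conjTranspose_conjTranspose,
      Matrix.diagonal_conjTranspose, hgstar, Matrix.mul_assoc]
  set B0 : Matrix m m ℂ := Q * Aᴴ with hB0_def
  have hB0H : B0ᴴ = A * Q := by
    rw [hB0_def, Matrix.conjTranspose_mul, Matrix.conjTranspose_conjTranspose, hQH]
  have hBA : B0 * A = hH.sqrt := by
    rw [hB0_def, hsqrt, hQ_def, Matrix.mul_assoc _ Aᴴ A, hspec]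
    simp only [Matrix.mul_assoc, huu']
    rw [← Matrix.mul_assoc (diagonal g), Matrix.diagonal_mul_diagonal]
    have hx : (fun i => g i * (lam i : ℂ)) = fun i => (Real.sqrt (lam i) : ℂ) := funext hgl
    rw [hx]
  have hBBH : B0 * B0ᴴ = u * diagonal e * uᴴ := by
    rw [hB0_def, hB0H]
    have : Q * Aᴴ * (A * Q) = Q * (Aᴴ * A) * Q := by
      rw [Matrix.mul_assoc Q Aᴴ (A * Q), ← Matrix.mul_assoc Aᴴ A Q, ← Matrix.mul_assoc]
    rw [this, hspec, hQ_def]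
    simp only [Matrix.mul_assoc, huu']
    rw [← Matrix.mul_assoc (diagonal (fun i => (lam i : ℂ))) (diagonal g) uᴴ,
      Matrix.diagonal_mul_diagonal,
      ← Matrix.mul_assoc (diagonal g), Matrix.diagonal_mul_diagonal]
    have hx : (fun i => g i * ((lam i : ℂ) * g i)) = e := funext hgsg
    rw [hx]
  have hee : (fun i => e i * e i) = e := by
    funext i
    by_cases h : lam i = 0 <;> simp [he_def, h]
  have hproj2 : (u * diagonal e * uᴴ) * (u * diagonal e * uᴴ) = u * diagonal e * uᴴ := by
    simp only [Matrix.mul_assoc, huu']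
    rw [← Matrix.mul_assoc (diagonal e) (diagonal e) uᴴ, Matrix.diagonal_mul_diagonal, hee]
  have hprojH : (u * diagonal e * uᴴ)ᴴ = u * diagonal e * uᴴ := by
    simp only [Matrix.conjTranspose_mul, Matrix.conjTranspose_conjTranspose,
      Matrix.diagonal_conjTranspose, hestar, Matrix.mul_assoc]
  have hB0n : ‖B0‖ ≤ 1 := tn_proj_norm_le hBBH hproj2 hprojH
  have hVn : ‖B0ᴴ‖ ≤ 1 := by rw [Matrix.l2_opNorm_conjTranspose]; exact hB0n
  -- A = B0ᴴ * sqrt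
  have hC : (A * u)ᴴ * (A * u) = diagonal (fun i => (lam i : ℂ)) := by
    rw [Matrix.conjTranspose_mul, Matrix.mul_assoc, ← Matrix.mul_assoc Aᴴ A u, hspec]
    simp only [Matrix.mul_assoc, huu']
    rw [huu, Matrix.mul_one]
  have hcol : ∀ i j, lam j = 0 → (A * u) i j = 0 := by
    intro i j hj
    have h1 : ((A * u)ᴴ * (A * u)) j j = 0 := by
      rw [hC, Matrix.diagonal_apply_eq]
      exact_mod_cast congrArg (fun r : ℝ => (r : ℂ)) hj
    rw [Matrix.mul_apply] at h1
    have h2 : ∑ k, (Complex.normSq ((A * u) k j) : ℂ) = 0 := by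
      rw [← h1]
      refine Finset.sum_congr rfl fun k _ => ?_
      rw [Matrix.conjTranspose_apply, Complex.normSq_eq_conj_mul_self]
      rfl
    have h3 : ∑ k, Complex.normSq ((A * u) k j) = 0 := by
      exact_mod_cast h2
    have h4 := (Finset.sum_eq_zero_iff_of_nonneg
      (fun k _ => Complex.normSq_nonneg ((A * u) k j))).mp h3 i (Finset.mem_univ i)
    exact Complex.normSq_eq_zero.mp h4
  have hCe : A * u * diagonal e = A * u := by
    ext i j
    rw [Matrix.mul_diagonal]
    by_cases hj : lam j = 0
    · simp [hcol i j hj]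
    · simp [he_def, hj]
  have hVA : B0ᴴ * hH.sqrt = A := by
    rw [hB0H, hsqrt, hQ_def]
    simp only [Matrix.mul_assoc, huu']
    rw [← Matrix.mul_assoc (diagonal g), Matrix.diagonal_mul_diagonal]
    have hfe : (fun i => g i * (Real.sqrt (lam i) : ℂ)) = e := funext hge
    rw [hfe]
    calc A * (u * (diagonal e * uᴴ)) = A * u * diagonal e * uᴴ := by
          simp only [Matrix.mul_assoc]
    _ = A * u * uᴴ := by rw [hCe]
    _ = A := by rw [Matrix.mul_assoc, huu2, Matrix.mul_one]
  refine ⟨htn_nonneg, ?_, ⟨B0, hB0n, by rw [hBA]; rfl⟩⟩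
  intro B
  set d : m → ℂ := fun i => (Real.sqrt (lam i) : ℂ) with hd_def
  set M : Matrix m m ℂ := uᴴ * (B * (B0ᴴ * u)) with hM_def
  have htr : (B * A).trace = (M * diagonal d).trace := by
    conv_lhs => rw [← hVA, hsqrt]
    rw [hM_def]
    have hcyc := Matrix.trace_mul_comm (B * (B0ᴴ * (u * diagonal d))) uᴴ
    simp only [Matrix.mul_assoc] at hcyc ⊢
    exact hcyc
  have hMn : ‖M‖ ≤ ‖B‖ := by
    calc ‖M‖ ≤ ‖uᴴ‖ * ‖B * (B0ᴴ * u)‖ := Matrix.l2_opNorm_mul _ _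
    _ ≤ ‖uᴴ‖ * (‖B‖ * ‖B0ᴴ * u‖) := by
        have := Matrix.l2_opNorm_mul B (B0ᴴ * u)
        nlinarith [norm_nonneg (uᴴ : Matrix m m ℂ), norm_nonneg (B * (B0ᴴ * u))]
    _ ≤ ‖B‖ := by
        have h1 := Matrix.l2_opNorm_mul B0ᴴ u
        have h2 : ‖B0ᴴ * u‖ ≤ 1 := by nlinarith [norm_nonneg (B0ᴴ), norm_nonneg u]
        calc ‖uᴴ‖ * (‖B‖ * ‖B0ᴴ * u‖) ≤ 1 * (‖B‖ * ‖B0ᴴ * u‖) :=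
              mul_le_mul_of_nonneg_right hnormuH (by positivity)
        _ = ‖B‖ * ‖B0ᴴ * u‖ := one_mul _
        _ ≤ ‖B‖ := mul_le_of_le_one_right (norm_nonneg B) h2
  have htrsum : (M * diagonal d).trace = ∑ j, M j j * d j := by
    simp [Matrix.trace, Matrix.diag, Matrix.mul_diagonal]
  rw [htr, htrsum]
  rw [Complex.re_sum]
  have hterm : ∀ j, (M j j * d j).re ≤ ‖B‖ * Real.sqrt (lam j) := by
    intro j
    have h1 : (M j j * d j).re = (M j j).re * Real.sqrt (lam j) := by
      rw [hd_def]
      simp [Complex.mul_re]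
    rw [h1]
    have h2 : (M j j).re ≤ ‖B‖ :=
      le_trans (Complex.re_le_norm _) (le_trans (tn_entry_le M j j) hMn)
    exact mul_le_mul_of_nonneg_right h2 (Real.sqrt_nonneg _)
  calc ∑ j, (M j j * d j).re ≤ ∑ j, ‖B‖ * Real.sqrt (lam j) :=
        Finset.sum_le_sum fun j _ => hterm j
  _ = ‖B‖ * traceNorm A := by rw [htrace, Finset.mul_sum]

lemma traceNorm_nonneg' (A : Matrix m m ℂ) : 0 ≤ traceNorm A := (tn_core A).1

lemma traceNorm_add_le (A B : Matrix m m ℂ) :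
    traceNorm (A + B) ≤ traceNorm A + traceNorm B := by
  obtain ⟨C, hC, hCe⟩ := (tn_core (A + B)).2.2
  rw [← hCe]
  have h1 : C * (A + B) = C * A + C * B := by rw [mul_add]
  rw [h1, Matrix.trace_add, Complex.add_re]
  have h2 := (tn_core A).2.1 C
  have h3 := (tn_core B).2.1 C
  have h4 : ‖C‖ * traceNorm A ≤ traceNorm A :=
    mul_le_of_le_one_left (traceNorm_nonneg' A) hC
  have h5 : ‖C‖ * traceNorm B ≤ traceNorm B :=
    mul_le_of_le_one_left (traceNorm_nonneg' B) hC
  linarith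

lemma traceNorm_zero : traceNorm (0 : Matrix m m ℂ) = 0 := by
  obtain ⟨B, _, hB⟩ := (tn_core (0 : Matrix m m ℂ)).2.2
  rw [← hB]
  simp

lemma traceNorm_mul_le_l (C A : Matrix m m ℂ) :
    traceNorm (C * A) ≤ ‖C‖ * traceNorm A := by
  obtain ⟨B, hB, hBe⟩ := (tn_core (C * A)).2.2
  rw [← hBe, ← Matrix.mul_assoc]
  refine le_trans ((tn_core A).2.1 (B * C)) ?_
  refine mul_le_mul_of_nonneg_right ?_ (traceNorm_nonneg' A)
  refine le_trans (Matrix.l2_opNorm_mul B C) ?_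
  exact mul_le_of_le_one_left (norm_nonneg C) hB

lemma traceNorm_mul_le_r (A C : Matrix m m ℂ) :
    traceNorm (A * C) ≤ traceNorm A * ‖C‖ := by
  obtain ⟨B, hB, hBe⟩ := (tn_core (A * C)).2.2
  rw [← hBe]
  have h1 : (B * (A * C)).trace = ((C * B) * A).trace := by
    rw [← Matrix.mul_assoc, Matrix.trace_mul_cycle]
  rw [h1]
  refine le_trans ((tn_core A).2.1 (C * B)) ?_
  rw [mul_comm (traceNorm A) ‖C‖]
  refine mul_le_mul_of_nonneg_right ?_ (traceNorm_nonneg' A)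
  refine le_trans (Matrix.l2_opNorm_mul C B) ?_
  exact mul_le_of_le_one_right (norm_nonneg C) hB

lemma traceNorm_smul_le (c : ℂ) (A : Matrix m m ℂ) :
    traceNorm (c • A) ≤ ‖c‖ * traceNorm A := by
  have h : c • A = (c • (1 : Matrix m m ℂ)) * A := by rw [smul_mul_assoc, one_mul]
  rw [h]
  refine le_trans (traceNorm_mul_le_l _ _) ?_
  refine mul_le_mul_of_nonneg_right ?_ (traceNorm_nonneg' A)
  rw [norm_smul]
  calc ‖c‖ * ‖(1 : Matrix m m ℂ)‖ ≤ ‖c‖ * 1 :=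
        mul_le_mul_of_nonneg_left tn_norm_one_le (norm_nonneg c)
  _ = ‖c‖ := mul_one _

lemma traceNorm_sum_le {ι : Type*} (s : Finset ι) (f : ι → Matrix m m ℂ) :
    traceNorm (∑ i ∈ s, f i) ≤ ∑ i ∈ s, traceNorm (f i) := by
  classical
  induction s using Finset.induction with
  | empty => simp [traceNorm_zero]
  | insert _ _ h ih =>
    rw [Finset.sum_insert h, Finset.sum_insert h]
    exact le_trans (traceNorm_add_le _ _) (by linarith)

lemma traceNorm_sub_le (A B : Matrix m m ℂ) :
    traceNorm (A - B) ≤ traceNorm A + traceNorm B := by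
  have h : A - B = A + (-1 : ℂ) • B := by
    rw [neg_one_smul]; exact sub_eq_add_neg A B
  rw [h]
  refine le_trans (traceNorm_add_le _ _) ?_
  have := traceNorm_smul_le (-1 : ℂ) B
  simp only [norm_neg, norm_one, one_mul] at this
  linarith
end TNAux

theorem stmt_3 {n k : ℕ} (U : Matrix (Fin n) (Fin n) ℂ)
    (hU : U ∈ Matrix.unitaryGroup (Fin n) ℂ)
    (W : Fin k → Matrix (Fin n) (Fin n) ℂ)
    (hW : ∀ a, W a ∈ Matrix.unitaryGroup (Fin n) ℂ)
    (q : Fin k → ℝ) (hq0 : ∀ a, 0 ≤ q a) (hq1 : ∑ a, q a = 1)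
    (Wbar : Matrix (Fin n) (Fin n) ℂ) (hWbar : Wbar = ∑ a, (q a : ℂ) • W a)
    (δ : ℝ) (hδ : δ = ∑ a, q a * ‖W a - Wbar‖ ^ 2)
    (σ : Matrix (Fin n) (Fin n) ℂ) (hσ : traceNorm σ ≤ 1) :
    traceNorm (U * σ * Uᴴ - ∑ a, (q a : ℂ) • (W a * σ * (W a)ᴴ)) ≤ δ + 2 * ‖Wbar - U‖ := by
  have hσ0 : 0 ≤ traceNorm σ := traceNorm_nonneg' σ
  have hsumW : ∑ a, (q a : ℂ) • W a = Wbar := hWbar.symm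
  have hq1c : (∑ a, (q a : ℂ)) = 1 := by
    have := congrArg (fun r : ℝ => (r : ℂ)) hq1
    push_cast at this
    exact this
  have hnormq : ∀ a, ‖(q a : ℂ)‖ = q a := by
    intro a
    rw [Complex.norm_real, Real.norm_eq_abs, _root_.abs_of_nonneg (hq0 a)]
  -- norm bounds
  have hnU : ‖U‖ ≤ 1 := tn_norm_unitary_le hU
  have hnUH : ‖Uᴴ‖ ≤ 1 := by rw [Matrix.l2_opNorm_conjTranspose]; exact hnU
  have hnWbar : ‖Wbar‖ ≤ 1 := by
    rw [hWbar]
    refine le_trans (norm_sum_le _ _) ?_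
    calc ∑ a, ‖(q a : ℂ) • W a‖ ≤ ∑ a, q a := by
          refine Finset.sum_le_sum fun a _ => ?_
          rw [norm_smul, hnormq a]
          exact mul_le_of_le_one_right (hq0 a) (tn_norm_unitary_le (hW a))
    _ = 1 := hq1
  -- algebraic identity
  have h1 : ∑ a, (q a : ℂ) • (W a * σ * Wbarᴴ) = Wbar * σ * Wbarᴴ := by
    calc ∑ a, (q a : ℂ) • (W a * σ * Wbarᴴ)
        = ∑ a, ((q a : ℂ) • W a) * (σ * Wbarᴴ) := by
          refine Finset.sum_congr rfl fun a _ => ?_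
          rw [Matrix.mul_assoc, smul_mul_assoc]
    _ = (∑ a, (q a : ℂ) • W a) * (σ * Wbarᴴ) := (Finset.sum_mul _ _ _).symm
    _ = Wbar * σ * Wbarᴴ := by rw [hsumW, Matrix.mul_assoc]
  have hWbarH : ∑ a, (q a : ℂ) • (W a)ᴴ = Wbarᴴ := by
    rw [hWbar, Matrix.conjTranspose_sum]
    refine Finset.sum_congr rfl fun a _ => ?_
    rw [Matrix.conjTranspose_smul]
    congr 1
    simp [Complex.star_def, Complex.conj_ofReal]
  have h2 : ∑ a, (q a : ℂ) • (Wbar * σ * (W a)ᴴ) = Wbar * σ * Wbarᴴ := by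
    calc ∑ a, (q a : ℂ) • (Wbar * σ * (W a)ᴴ)
        = ∑ a, (Wbar * σ) * ((q a : ℂ) • (W a)ᴴ) := by
          refine Finset.sum_congr rfl fun a _ => ?_
          rw [mul_smul_comm]
    _ = (Wbar * σ) * (∑ a, (q a : ℂ) • (W a)ᴴ) := (Finset.mul_sum _ _ _).symm
    _ = Wbar * σ * Wbarᴴ := by rw [hWbarH]
  have h3 : ∑ a, (q a : ℂ) • (Wbar * σ * Wbarᴴ) = Wbar * σ * Wbarᴴ := by
    rw [← Finset.sum_smul, hq1c, one_smul]
  have hexp : ∀ a : Fin k, (q a : ℂ) • ((W a - Wbar) * σ * (W a - Wbar)ᴴ) =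
      (q a : ℂ) • (W a * σ * (W a)ᴴ) - (q a : ℂ) • (W a * σ * Wbarᴴ)
        - (q a : ℂ) • (Wbar * σ * (W a)ᴴ) + (q a : ℂ) • (Wbar * σ * Wbarᴴ) := by
    intro a
    rw [Matrix.conjTranspose_sub]
    simp only [Matrix.sub_mul, Matrix.mul_sub, smul_sub]
    abel
  have hs : ∑ a, (q a : ℂ) • ((W a - Wbar) * σ * (W a - Wbar)ᴴ)
      = (∑ a, (q a : ℂ) • (W a * σ * (W a)ᴴ)) - Wbar * σ * Wbarᴴ := by
    simp only [hexp]
    rw [Finset.sum_add_distrib, Finset.sum_sub_distrib, Finset.sum_sub_distrib, h1, h2, h3]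
    abel
  have hkey : U * σ * Uᴴ - ∑ a, (q a : ℂ) • (W a * σ * (W a)ᴴ)
      = (U - Wbar) * σ * Uᴴ + Wbar * σ * (U - Wbar)ᴴ
        - ∑ a, (q a : ℂ) • ((W a - Wbar) * σ * (W a - Wbar)ᴴ) := by
    rw [hs]
    simp only [Matrix.conjTranspose_sub, Matrix.sub_mul, Matrix.mul_sub]
    abel
  rw [hkey]
  -- bounds
  have hnsub : ‖U - Wbar‖ = ‖Wbar - U‖ := norm_sub_rev _ _
  have hb1 : traceNorm ((U - Wbar) * σ * Uᴴ) ≤ ‖Wbar - U‖ := by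
    refine le_trans (traceNorm_mul_le_r _ _) ?_
    have ha : traceNorm ((U - Wbar) * σ) ≤ ‖U - Wbar‖ := by
      refine le_trans (traceNorm_mul_le_l _ _) ?_
      exact mul_le_of_le_one_right (norm_nonneg _) hσ
    calc traceNorm ((U - Wbar) * σ) * ‖Uᴴ‖ ≤ ‖U - Wbar‖ * 1 := by
          refine mul_le_mul ha hnUH (norm_nonneg _) (norm_nonneg _)
    _ = ‖Wbar - U‖ := by rw [mul_one, hnsub]
  have hb2 : traceNorm (Wbar * σ * (U - Wbar)ᴴ) ≤ ‖Wbar - U‖ := by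
    refine le_trans (traceNorm_mul_le_r _ _) ?_
    have ha : traceNorm (Wbar * σ) ≤ 1 := by
      refine le_trans (traceNorm_mul_le_l _ _) ?_
      calc ‖Wbar‖ * traceNorm σ ≤ 1 * 1 :=
            mul_le_mul hnWbar hσ hσ0 zero_le_one
      _ = 1 := one_mul 1
    calc traceNorm (Wbar * σ) * ‖(U - Wbar)ᴴ‖ ≤ 1 * ‖(U - Wbar)ᴴ‖ :=
          mul_le_mul_of_nonneg_right ha (norm_nonneg _)
    _ = ‖Wbar - U‖ := by rw [one_mul, Matrix.l2_opNorm_conjTranspose, hnsub]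
  have hb3 : traceNorm (∑ a, (q a : ℂ) • ((W a - Wbar) * σ * (W a - Wbar)ᴴ)) ≤ δ := by
    refine le_trans (traceNorm_sum_le _ _) ?_
    rw [hδ]
    refine Finset.sum_le_sum fun a _ => ?_
    refine le_trans (traceNorm_smul_le _ _) ?_
    rw [hnormq a]
    refine mul_le_mul_of_nonneg_left ?_ (hq0 a)
    have hd : traceNorm ((W a - Wbar) * σ * (W a - Wbar)ᴴ) ≤ ‖W a - Wbar‖ * ‖W a - Wbar‖ := by
      refine le_trans (traceNorm_mul_le_r _ _) ?_
      rw [Matrix.l2_opNorm_conjTranspose]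
      refine mul_le_mul_of_nonneg_right ?_ (norm_nonneg _)
      refine le_trans (traceNorm_mul_le_l _ _) ?_
      exact mul_le_of_le_one_right (norm_nonneg _) hσ
    calc traceNorm ((W a - Wbar) * σ * (W a - Wbar)ᴴ) ≤ ‖W a - Wbar‖ * ‖W a - Wbar‖ := hd
    _ = ‖W a - Wbar‖ ^ 2 := (sq ‖W a - Wbar‖).symm
  refine le_trans (traceNorm_sub_le _ _) ?_
  refine le_trans (add_le_add_left (traceNorm_add_le _ _) _) ?_
  linarith
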